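/- arXiv:1602.08023 — 3 statements merged into one kernel-verified Lean document; each statement's English description precedes it below -/
import Mathlib

section
/- Let the agents be partitioned into levels 0, 1, …, k−1 with ℓ_i ≥ 1 agents at level i, and let n_i = ℓ_0 + ℓ_1 + … + ℓ_i. The probability that a uniformly random ordering of all n_{k−1} agents has the chain-of-levels property equals ∏_{i=1}^{k−1} (1 − n_{i−1}/n_i). -/
/-- The ordering `σ` (where `σ t` is the agent in position `t`) has the chain-of-levels
property for the level function `lvl`: for each level `i ≥ 1`, some agent of level `i`
appears after all agents of levels `0, …, i − 1`. -/
def ChainOfLevels {n k : ℕ} (lvl : Fin n → Fin k) (σ : Equiv.Perm (Fin n)) : Prop :=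
  ∀ i : Fin k, 0 < (i : ℕ) →
    ∃ t : Fin n, lvl (σ t) = i ∧ ∀ s : Fin n, (lvl (σ s) : ℕ) < (i : ℕ) → s < t

instance {n k : ℕ} (lvl : Fin n → Fin k) (σ : Equiv.Perm (Fin n)) :
    Decidable (ChainOfLevels lvl σ) := by
  unfold ChainOfLevels; infer_instance


open Finset

variable {n : ℕ}

/-- Cyclic rotation along the sorted elements of `S`: each element of `S` maps to the next
larger element of `S`, the largest maps to the smallest; elements off `S` are fixed. -/
def rotS (S : Finset (Fin n)) : Equiv.Perm (Fin n) :=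
  (finRotate S.card).extendDomain (S.orderIsoOfFin rfl).toEquiv

lemma finRotate_val_of_lt {q : ℕ} (i : Fin q) (h : (i : ℕ) + 1 < q) :
    ((finRotate q i : Fin q) : ℕ) = (i : ℕ) + 1 := by
  match q, i with
  | q + 1, i =>
    rw [coe_finRotate]
    split
    · rename_i hl; subst hl; simp at h
    · rfl

lemma finRotate_val_of_last {q : ℕ} (i : Fin q) (h : (i : ℕ) + 1 = q) :
    ((finRotate q i : Fin q) : ℕ) = 0 := by
  match q, i with
  | q + 1, i =>
    have : i = Fin.last q := by ext; simpa using Nat.succ_injective h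
    subst this
    rw [finRotate_last]; rfl

lemma rotS_apply_not_mem {S : Finset (Fin n)} {x : Fin n} (hx : x ∉ S) : rotS S x = x :=
  Equiv.Perm.extendDomain_apply_not_subtype _ _ hx

lemma rotS_apply_mem {S : Finset (Fin n)} {x : Fin n} (hx : x ∈ S) :
    rotS S x = ((S.orderIsoOfFin rfl) (finRotate S.card ((S.orderIsoOfFin rfl).symm ⟨x, hx⟩)) : Fin n) :=
  Equiv.Perm.extendDomain_apply_subtype _ _ hx

lemma rotS_mem {S : Finset (Fin n)} {x : Fin n} (hx : x ∈ S) : rotS S x ∈ S := by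
  rw [rotS_apply_mem hx]; exact Finset.coe_mem _

lemma rotS_inv_apply_not_mem {S : Finset (Fin n)} {x : Fin n} (hx : x ∉ S) : (rotS S)⁻¹ x = x := by
  rw [rotS, Equiv.Perm.extendDomain_inv]
  exact Equiv.Perm.extendDomain_apply_not_subtype _ _ hx

lemma rotS_inv_mem {S : Finset (Fin n)} {x : Fin n} (hx : x ∈ S) : (rotS S)⁻¹ x ∈ S := by
  rw [rotS, Equiv.Perm.extendDomain_inv,
    Equiv.Perm.extendDomain_apply_subtype _ _ hx]
  exact Finset.coe_mem _

lemma orderIsoOfFin_last {S : Finset (Fin n)} (h : S.Nonempty) (i : Fin S.card)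
    (hi : (i : ℕ) + 1 = S.card) : ((S.orderIsoOfFin rfl) i : Fin n) = S.max' h := by
  apply le_antisymm
  · exact S.le_max' _ (Finset.coe_mem _)
  · obtain ⟨jm, hjm⟩ := (S.orderIsoOfFin rfl).surjective ⟨S.max' h, S.max'_mem h⟩
    have : jm ≤ i := by
      rw [Fin.le_def]; omega
    have := (S.orderIsoOfFin rfl).monotone this
    rw [hjm] at this
    exact this

lemma orderIsoOfFin_zero {S : Finset (Fin n)} (h : S.Nonempty) (i : Fin S.card)
    (hi : (i : ℕ) = 0) : ((S.orderIsoOfFin rfl) i : Fin n) = S.min' h := by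
  apply le_antisymm
  · obtain ⟨jm, hjm⟩ := (S.orderIsoOfFin rfl).surjective ⟨S.min' h, S.min'_mem h⟩
    have : i ≤ jm := by rw [Fin.le_def]; omega
    have := (S.orderIsoOfFin rfl).monotone this
    rw [hjm] at this
    exact this
  · exact S.min'_le _ (Finset.coe_mem _)

lemma rotS_max' {S : Finset (Fin n)} (h : S.Nonempty) : rotS S (S.max' h) = S.min' h := by
  rw [rotS_apply_mem (S.max'_mem h)]
  set i := (S.orderIsoOfFin rfl).symm ⟨S.max' h, S.max'_mem h⟩ with hidef
  have hival : (i : ℕ) + 1 = S.card := by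
    by_contra hne
    have hlt : (i : ℕ) + 1 < S.card := by have := i.isLt; omega
    -- then e i < e (i+1number) contradicting max'
    have h1 : ((S.orderIsoOfFin rfl) i : Fin n) = S.max' h := by
      rw [hidef]; simp
    have h2 := (S.orderIsoOfFin rfl).strictMono (show i < ⟨(i : ℕ) + 1, hlt⟩ by
      rw [Fin.lt_def]; simp)
    rw [Subtype.coe_lt_coe.symm] at h2
    have := S.le_max' _ (Finset.coe_mem ((S.orderIsoOfFin rfl) ⟨(i : ℕ) + 1, hlt⟩))
    rw [h1] at h2
    exact absurd this (not_le.mpr h2)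
  have : ((finRotate S.card) i : ℕ) = 0 := finRotate_val_of_last i hival
  exact orderIsoOfFin_zero h _ this

lemma rotS_lt_rotS {S : Finset (Fin n)} (h : S.Nonempty) {x y : Fin n} (hx : x ∈ S) (hy : y ∈ S)
    (hxy : x < y) (hyM : y ≠ S.max' h) : rotS S x < rotS S y := by
  set e := S.orderIsoOfFin rfl with he
  set ix := e.symm ⟨x, hx⟩ with hix
  set iy := e.symm ⟨y, hy⟩ with hiy
  have hixy : ix < iy := by
    rw [hix, hiy, e.symm.lt_iff_lt]
    exact Subtype.mk_lt_mk.mpr hxy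
  have hiyl : (iy : ℕ) + 1 < S.card := by
    rcases Nat.lt_or_ge ((iy : ℕ) + 1) S.card with h' | h'
    · exact h'
    · exfalso
      have : (iy : ℕ) + 1 = S.card := by have := iy.isLt; omega
      have := orderIsoOfFin_last h iy this
      rw [hiy] at this
      simp only [he, OrderIso.apply_symm_apply] at this
      exact hyM this
  have hixl : (ix : ℕ) + 1 < S.card := by
    have : (ix : ℕ) < (iy : ℕ) := hixy
    omega
  rw [rotS_apply_mem hx, rotS_apply_mem hy, ← he, ← hix, ← hiy]
  refine Subtype.coe_lt_coe.mpr (e.strictMono ?_)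
  rw [Fin.lt_def, finRotate_val_of_lt ix hixl, finRotate_val_of_lt iy hiyl]
  have : (ix : ℕ) < (iy : ℕ) := hixy
  omega

lemma rotS_inv_lt_rotS_inv {S : Finset (Fin n)} (h : S.Nonempty) {x y : Fin n} (hx : x ∈ S)
    (hy : y ∈ S) (hxy : x < y) (hxm : x ≠ S.min' h) :
    (rotS S)⁻¹ x < (rotS S)⁻¹ y := by
  set u := (rotS S)⁻¹ x with hu
  set v := (rotS S)⁻¹ y with hv
  have hus : u ∈ S := rotS_inv_mem hx
  have hvs : v ∈ S := rotS_inv_mem hy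
  have hcu : rotS S u = x := by rw [hu]; simp
  have hcv : rotS S v = y := by rw [hv]; simp
  rcases lt_trichotomy u v with h' | h' | h'
  · exact h'
  · exfalso; rw [h', hcv] at hcu; exact absurd hcu (ne_of_gt hxy)
  · exfalso
    by_cases hum : u = S.max' h
    · rw [hum, rotS_max' h] at hcu
      exact hxm hcu.symm
    · have := rotS_lt_rotS h hvs hus h' hum
      rw [hcu, hcv] at this
      exact lt_irrefl _ (hxy.trans this)


open scoped Classical

section Main

variable {k : ℕ} (lvl : Fin n → Fin k)

/-- Conditions of the chain property for levels `1, …, j`, phrased with natural number levels. -/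
def Cond (j : ℕ) (σ : Equiv.Perm (Fin n)) : Prop :=
  ∀ i : ℕ, 1 ≤ i → i ≤ j →
    ∃ t : Fin n, (lvl (σ t) : ℕ) = i ∧ ∀ s : Fin n, (lvl (σ s) : ℕ) < i → s < t

/-- Positions of agents of level at most `j` under the ordering `σ`. -/
def Pos (j : ℕ) (σ : Equiv.Perm (Fin n)) : Finset (Fin n) :=
  Finset.univ.filter fun t => (lvl (σ t) : ℕ) ≤ j

lemma mem_Pos {j : ℕ} {σ : Equiv.Perm (Fin n)} {t : Fin n} :
    t ∈ Pos lvl j σ ↔ (lvl (σ t) : ℕ) ≤ j := by simp [Pos]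

lemma Pos_nonempty (hk : 0 < k)
    (hfull : ∀ i : Fin k, 0 < (Finset.univ.filter (fun a => lvl a = i)).card)
    (j : ℕ) (σ : Equiv.Perm (Fin n)) : (Pos lvl j σ).Nonempty := by
  obtain ⟨a, ha⟩ := Finset.card_pos.mp (hfull ⟨0, hk⟩)
  simp only [mem_filter] at ha
  refine ⟨σ⁻¹ a, ?_⟩
  rw [mem_Pos]
  simp [ha.2]

lemma cond_zero (σ : Equiv.Perm (Fin n)) : Cond lvl 0 σ := by
  intro i h1 h0; omega

lemma cond_transfer {j : ℕ} {σ c : Equiv.Perm (Fin n)}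
    (hmono : ∀ s t : Fin n, (lvl (σ s) : ℕ) < j → (lvl (σ t) : ℕ) < j → s < t → c s < c t)
    (h : Cond lvl (j - 1) σ) : Cond lvl (j - 1) (σ * c⁻¹) := by
  intro i h1 hij
  obtain ⟨t, ht1, ht2⟩ := h i h1 hij
  have hij' : i < j := by omega
  refine ⟨c t, by simp [Equiv.Perm.mul_apply, ht1], ?_⟩
  intro s hs
  have hs0 : (lvl (σ (c⁻¹ s)) : ℕ) < i := by simpa [Equiv.Perm.mul_apply] using hs
  have h2 : c⁻¹ s < t := ht2 _ hs0
  have h3 := hmono (c⁻¹ s) t (by omega) (by omega) h2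
  simpa using h3

lemma seg_nonempty {P : Finset (Fin n)} {p : Fin n} (hp : p ∈ P) :
    (P.filter fun t => p ≤ t).Nonempty :=
  ⟨p, Finset.mem_filter.mpr ⟨hp, le_refl p⟩⟩

lemma seg_min' {P : Finset (Fin n)} {p : Fin n} (hp : p ∈ P) :
    (P.filter fun t => p ≤ t).min' (seg_nonempty hp) = p := by
  apply le_antisymm
  · exact Finset.min'_le _ _ (Finset.mem_filter.mpr ⟨hp, le_refl p⟩)
  · apply Finset.le_min'
    intro y hy
    exact (Finset.mem_filter.mp hy).2

lemma seg_max' {P : Finset (Fin n)} {p : Fin n} (hp : p ∈ P) (hP : P.Nonempty) :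
    (P.filter fun t => p ≤ t).max' (seg_nonempty hp) = P.max' hP := by
  apply le_antisymm
  · exact Finset.le_max' _ _ (Finset.mem_of_mem_filter _ (Finset.max'_mem _ _))
  · exact Finset.le_max' _ _ (Finset.mem_filter.mpr ⟨P.max'_mem hP, Finset.le_max' _ _ hp⟩)

lemma max'_congr {S T : Finset (Fin n)} (h : S = T) (hS : S.Nonempty) (hT : T.Nonempty) :
    S.max' hS = T.max' hT := by subst h; rfl

lemma rot_seg_lt {P : Finset (Fin n)} {p : Fin n} (hp : p ∈ P) {s t : Fin n}
    (hs : s ∈ P) (ht : t ∈ P) (hst : s < t) (hPne : P.Nonempty) (htM : t ≠ P.max' hPne) :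
    rotS (P.filter fun x => p ≤ x) s < rotS (P.filter fun x => p ≤ x) t := by
  set S := P.filter fun x => p ≤ x with hS
  have hSne : S.Nonempty := seg_nonempty hp
  by_cases hsS : s ∈ S <;> by_cases htS : t ∈ S
  · refine rotS_lt_rotS hSne hsS htS hst ?_
    have hm : S.max' hSne = P.max' hPne := seg_max' hp hPne
    rw [hm]
    exact htM
  · exfalso
    have h1 : p ≤ s := (Finset.mem_filter.mp hsS).2
    have h2 : ¬ p ≤ t := fun hh => htS (Finset.mem_filter.mpr ⟨ht, hh⟩)
    exact h2 (h1.trans hst.le)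
  · rw [rotS_apply_not_mem hsS]
    have h1 : ¬ p ≤ s := fun hh => hsS (Finset.mem_filter.mpr ⟨hs, hh⟩)
    have h2 : p ≤ rotS S t := (Finset.mem_filter.mp (rotS_mem htS)).2
    exact lt_of_lt_of_le (lt_of_not_ge h1) h2
  · rw [rotS_apply_not_mem hsS, rotS_apply_not_mem htS]
    exact hst

lemma rot_seg_inv_lt {P : Finset (Fin n)} {p : Fin n} (hp : p ∈ P) {s t : Fin n}
    (hs : s ∈ P) (ht : t ∈ P) (hst : s < t) (hsp : s ≠ p) :
    (rotS (P.filter fun x => p ≤ x))⁻¹ s < (rotS (P.filter fun x => p ≤ x))⁻¹ t := by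
  set S := P.filter fun x => p ≤ x with hS
  have hSne : S.Nonempty := seg_nonempty hp
  by_cases hsS : s ∈ S <;> by_cases htS : t ∈ S
  · refine rotS_inv_lt_rotS_inv hSne hsS htS hst ?_
    have hm : S.min' hSne = p := seg_min' hp
    rw [hm]
    exact hsp
  · exfalso
    have h1 : p ≤ s := (Finset.mem_filter.mp hsS).2
    have h2 : ¬ p ≤ t := fun hh => htS (Finset.mem_filter.mpr ⟨ht, hh⟩)
    exact h2 (h1.trans hst.le)
  · rw [rotS_inv_apply_not_mem hsS]
    have h1 : ¬ p ≤ s := fun hh => hsS (Finset.mem_filter.mpr ⟨hs, hh⟩)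
    have h2 : p ≤ (rotS S)⁻¹ t := (Finset.mem_filter.mp (rotS_inv_mem htS)).2
    exact lt_of_lt_of_le (lt_of_not_ge h1) h2
  · rw [rotS_inv_apply_not_mem hsS, rotS_inv_apply_not_mem htS]
    exact hst

lemma Pos_mul {j : ℕ} {σ c : Equiv.Perm (Fin n)} {S : Finset (Fin n)}
    (hSP : S ⊆ Pos lvl j σ) (hc1 : ∀ x, x ∈ S → c x ∈ S) (hc2 : ∀ x, x ∉ S → c x = x) :
    Pos lvl j (σ * c) = Pos lvl j σ := by
  ext t
  simp only [mem_Pos, Equiv.Perm.mul_apply]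
  by_cases h : t ∈ S
  · constructor
    · intro _; exact (mem_Pos lvl).mp (hSP h)
    · intro _; exact (mem_Pos lvl).mp (hSP (hc1 t h))
  · rw [hc2 t h]

lemma down_spec (hk : 0 < k)
    (hfull : ∀ i : Fin k, 0 < (Finset.univ.filter (fun a => lvl a = i)).card)
    {j : ℕ} (hj : 1 ≤ j) {σ : Equiv.Perm (Fin n)} {a : Fin n}
    (hσ : Cond lvl j σ) (ha : (lvl a : ℕ) ≤ j) :
    (lvl (σ ((Pos lvl j σ).max' (Pos_nonempty lvl hk hfull j σ))) : ℕ) = j ∧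
    Cond lvl (j - 1) (σ * (rotS ((Pos lvl j σ).filter fun t => σ⁻¹ a ≤ t))⁻¹) ∧
    Pos lvl j (σ * (rotS ((Pos lvl j σ).filter fun t => σ⁻¹ a ≤ t))⁻¹) = Pos lvl j σ ∧
    (σ * (rotS ((Pos lvl j σ).filter fun t => σ⁻¹ a ≤ t))⁻¹)⁻¹
      (σ ((Pos lvl j σ).max' (Pos_nonempty lvl hk hfull j σ))) = σ⁻¹ a := by
  set P := Pos lvl j σ with hPdef
  set p := σ⁻¹ a with hpdef
  have hp : p ∈ P := (mem_Pos lvl).mpr (by simp [hpdef, ha])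
  set hPne := Pos_nonempty lvl hk hfull j σ
  set M := P.max' hPne with hMdef
  set S := P.filter fun t => p ≤ t with hSdef
  have hMP : M ∈ P := P.max'_mem hPne
  have hM : (lvl (σ M) : ℕ) = j := by
    obtain ⟨t, ht1, ht2⟩ := hσ j hj le_rfl
    have h1 : (lvl (σ M) : ℕ) ≤ j := (mem_Pos lvl).mp hMP
    rcases eq_or_lt_of_le h1 with h | h
    · exact h
    · exfalso
      have h2 : M < t := ht2 M h
      have h3 : t ≤ M := Finset.le_max' _ _ ((mem_Pos lvl).mpr ht1.le)
      exact absurd h2 (not_lt.mpr h3)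
  have hmono : ∀ s t : Fin n, (lvl (σ s) : ℕ) < j → (lvl (σ t) : ℕ) < j → s < t →
      rotS S s < rotS S t := by
    intro s t hs ht hst
    refine rot_seg_lt hp ((mem_Pos lvl).mpr hs.le) ((mem_Pos lvl).mpr ht.le) hst hPne ?_
    intro hcontra
    rw [hcontra] at ht
    rw [← hMdef] at ht
    omega
  have h1 : Cond lvl (j - 1) (σ * (rotS S)⁻¹) :=
    cond_transfer lvl hmono (fun i hi1 hij => hσ i hi1 (by omega))
  have h3 : Pos lvl j (σ * (rotS S)⁻¹) = P :=
    Pos_mul lvl (Finset.filter_subset _ _) (fun x hx => rotS_inv_mem hx)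
      (fun x hx => rotS_inv_apply_not_mem hx)
  have h4 : (σ * (rotS S)⁻¹)⁻¹ (σ M) = p := by
    have e0 : (σ * (rotS S)⁻¹)⁻¹ (σ M) = rotS S M := by
      simp [Equiv.Perm.mul_apply]
    rw [e0]
    have hMS : M = S.max' (seg_nonempty hp) := (seg_max' hp hPne).symm
    rw [hMS, rotS_max' (seg_nonempty hp)]
    exact seg_min' hp
  exact ⟨hM, h1, h3, h4⟩

lemma up_spec (hk : 0 < k)
    (hfull : ∀ i : Fin k, 0 < (Finset.univ.filter (fun a => lvl a = i)).card)
    {j : ℕ} (hj : 1 ≤ j) {σ' : Equiv.Perm (Fin n)} {h : Fin n}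
    (hσ' : Cond lvl (j - 1) σ') (hh : (lvl h : ℕ) = j) :
    Cond lvl j (σ' * rotS ((Pos lvl j σ').filter fun t => σ'⁻¹ h ≤ t)) ∧
    (lvl ((σ' * rotS ((Pos lvl j σ').filter fun t => σ'⁻¹ h ≤ t)) (σ'⁻¹ h)) : ℕ) ≤ j ∧
    Pos lvl j (σ' * rotS ((Pos lvl j σ').filter fun t => σ'⁻¹ h ≤ t)) = Pos lvl j σ' ∧
    (σ' * rotS ((Pos lvl j σ').filter fun t => σ'⁻¹ h ≤ t))
      ((Pos lvl j (σ' * rotS ((Pos lvl j σ').filter fun t => σ'⁻¹ h ≤ t))).max'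
        (Pos_nonempty lvl hk hfull j _)) = h := by
  set P := Pos lvl j σ' with hPdef
  set p := σ'⁻¹ h with hpdef
  have hp : p ∈ P := (mem_Pos lvl).mpr (by simp [hpdef, hh])
  have hPne : P.Nonempty := ⟨p, hp⟩
  set S := P.filter fun t => p ≤ t with hSdef
  set σ := σ' * rotS S with hσdef
  have h3 : Pos lvl j σ = P :=
    Pos_mul lvl (Finset.filter_subset _ _) (fun x hx => rotS_mem hx)
      (fun x hx => rotS_apply_not_mem hx)
  have hMx : σ ((Pos lvl j σ).max' (Pos_nonempty lvl hk hfull j σ)) = h := by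
    have e1 : (Pos lvl j σ).max' (Pos_nonempty lvl hk hfull j σ) = P.max' hPne :=
      max'_congr h3 _ _
    have e2 : P.max' hPne = S.max' (seg_nonempty hp) := (seg_max' hp hPne).symm
    rw [e1, e2, hσdef]
    rw [Equiv.Perm.mul_apply, rotS_max' (seg_nonempty hp), seg_min' hp]
    simp [hpdef]
  have hpS : p ∈ S := Finset.mem_filter.mpr ⟨hp, le_refl p⟩
  have ha : (lvl (σ p) : ℕ) ≤ j := by
    rw [hσdef, Equiv.Perm.mul_apply]
    exact (mem_Pos lvl).mp (Finset.mem_of_mem_filter _ (rotS_mem hpS))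
  have hlow : Cond lvl (j - 1) σ := by
    have hmono : ∀ s t : Fin n, (lvl (σ' s) : ℕ) < j → (lvl (σ' t) : ℕ) < j → s < t →
        (rotS S)⁻¹ s < (rotS S)⁻¹ t := by
      intro s t hs ht hst
      refine rot_seg_inv_lt hp ((mem_Pos lvl).mpr hs.le) ((mem_Pos lvl).mpr ht.le) hst ?_
      intro hcontra
      rw [hcontra, hpdef] at hs
      simp [hh] at hs
    have := cond_transfer lvl hmono hσ'
    rw [inv_inv] at this
    exact this
  have hcond : Cond lvl j σ := by
    intro i hi1 hij
    rcases eq_or_lt_of_le hij with rfl | hlt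
    · refine ⟨(Pos lvl i σ).max' (Pos_nonempty lvl hk hfull i σ), by rw [hMx]; exact hh, ?_⟩
      intro s hs
      have hsP : s ∈ Pos lvl i σ := (mem_Pos lvl).mpr hs.le
      have hsle : s ≤ (Pos lvl i σ).max' (Pos_nonempty lvl hk hfull i σ) :=
        Finset.le_max' _ _ hsP
      refine lt_of_le_of_ne hsle ?_
      intro hcontra
      rw [hcontra] at hs
      rw [hMx] at hs
      omega
    · exact hlow i hi1 (by omega)
  exact ⟨hcond, ha, h3, hMx⟩

lemma peel (hk : 0 < k)
    (hfull : ∀ i : Fin k, 0 < (Finset.univ.filter (fun a => lvl a = i)).card)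
    {j : ℕ} (hj : 1 ≤ j) :
    (Finset.univ.filter (Cond lvl j)).card *
      (Finset.univ.filter fun a : Fin n => (lvl a : ℕ) ≤ j).card =
    (Finset.univ.filter (Cond lvl (j - 1))).card *
      (Finset.univ.filter fun a : Fin n => (lvl a : ℕ) = j).card := by
  rw [← Finset.card_product, ← Finset.card_product]
  refine Finset.card_nbij'
    (fun x => (x.1 * (rotS ((Pos lvl j x.1).filter fun t => x.1⁻¹ x.2 ≤ t))⁻¹,
               x.1 ((Pos lvl j x.1).max' (Pos_nonempty lvl hk hfull j x.1))))
    (fun y => (y.1 * rotS ((Pos lvl j y.1).filter fun t => y.1⁻¹ y.2 ≤ t),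
               (y.1 * rotS ((Pos lvl j y.1).filter fun t => y.1⁻¹ y.2 ≤ t)) (y.1⁻¹ y.2)))
    ?_ ?_ ?_ ?_
  · rintro ⟨σ, a⟩ hx
    rw [Finset.mem_coe, Finset.mem_product] at hx ⊢
    simp only [Finset.mem_filter, Finset.mem_univ, true_and] at hx ⊢
    obtain ⟨hM, h1, h3, h4⟩ := down_spec lvl hk hfull hj hx.1 hx.2
    exact ⟨h1, hM⟩
  · rintro ⟨σ', h⟩ hy
    rw [Finset.mem_coe, Finset.mem_product] at hy ⊢
    simp only [Finset.mem_filter, Finset.mem_univ, true_and] at hy ⊢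
    obtain ⟨hcond, ha, h3, hMx⟩ := up_spec lvl hk hfull hj hy.1 hy.2
    exact ⟨hcond, ha⟩
  · rintro ⟨σ, a⟩ hx
    rw [Finset.mem_coe, Finset.mem_product] at hx
    simp only [Finset.mem_filter, Finset.mem_univ, true_and] at hx
    obtain ⟨hM, h1, h3, h4⟩ := down_spec lvl hk hfull hj hx.1 hx.2
    simp only []
    rw [h3, h4]
    refine Prod.ext ?_ ?_
    · exact inv_mul_cancel_right σ _
    · show (σ * _⁻¹ * _) (σ⁻¹ a) = a
      rw [inv_mul_cancel_right]
      exact Equiv.apply_symm_apply σ a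
  · rintro ⟨σ', h⟩ hy
    rw [Finset.mem_coe, Finset.mem_product] at hy
    simp only [Finset.mem_filter, Finset.mem_univ, true_and] at hy
    obtain ⟨hcond, ha, h3, hMx⟩ := up_spec lvl hk hfull hj hy.1 hy.2
    simp only []
    rw [show (σ' * rotS ((Pos lvl j σ').filter fun t => σ'⁻¹ h ≤ t))⁻¹
          ((σ' * rotS ((Pos lvl j σ').filter fun t => σ'⁻¹ h ≤ t)) (σ'⁻¹ h)) = σ'⁻¹ h
        from Equiv.symm_apply_apply _ _]
    refine Prod.ext ?_ hMx
    show σ' * _ * _⁻¹ = σ'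
    rw [h3]
    exact mul_inv_cancel_right σ' _

lemma count (hk : 0 < k)
    (hfull : ∀ i : Fin k, 0 < (Finset.univ.filter (fun a => lvl a = i)).card) :
    ∀ j : ℕ, (Finset.univ.filter (Cond lvl j)).card *
        ∏ i ∈ Finset.Icc 1 j, (Finset.univ.filter fun a : Fin n => (lvl a : ℕ) ≤ i).card
      = (Nat.factorial n) *
        ∏ i ∈ Finset.Icc 1 j, (Finset.univ.filter fun a : Fin n => (lvl a : ℕ) = i).card := by
  intro j
  induction j with
  | zero =>
    rw [Finset.Icc_eq_empty (by omega), Finset.prod_empty, Finset.prod_empty, mul_one, mul_one]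
    have huniv : (Finset.univ.filter (Cond lvl 0)) = Finset.univ :=
      Finset.filter_true_of_mem (fun σ _ => cond_zero lvl σ)
    rw [huniv, Finset.card_univ, Fintype.card_perm, Fintype.card_fin]
  | succ j ih =>
    rw [Finset.prod_Icc_succ_top (by omega), Finset.prod_Icc_succ_top (by omega)]
    have hp := peel lvl hk hfull (j := j + 1) (by omega)
    simp only [Nat.add_sub_cancel] at hp
    set A1 := (Finset.univ.filter (Cond lvl (j + 1))).card
    set A0 := (Finset.univ.filter (Cond lvl j)).card
    set PN := ∏ i ∈ Finset.Icc 1 j, (Finset.univ.filter fun a : Fin n => (lvl a : ℕ) ≤ i).card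
    set PL := ∏ i ∈ Finset.Icc 1 j, (Finset.univ.filter fun a : Fin n => (lvl a : ℕ) = i).card
    set Nj := (Finset.univ.filter fun a : Fin n => (lvl a : ℕ) ≤ j + 1).card
    set Lj := (Finset.univ.filter fun a : Fin n => (lvl a : ℕ) = j + 1).card
    calc A1 * (PN * Nj) = (A1 * Nj) * PN := by ring
      _ = (A0 * Lj) * PN := by rw [hp]
      _ = (A0 * PN) * Lj := by ring
      _ = (Nat.factorial n * PL) * Lj := by rw [ih]
      _ = Nat.factorial n * (PL * Lj) := by ring

end Main

theorem chain_of_levels_probability' {n k : ℕ} (hk : 0 < k) (lvl : Fin n → Fin k)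
    (hfull : ∀ i : Fin k, 0 < (Finset.univ.filter (fun a => lvl a = i)).card) :
    ((Finset.univ.filter (fun σ : Equiv.Perm (Fin n) => ChainOfLevels lvl σ)).card : ℝ)
        / (Nat.factorial n : ℝ) =
      ∏ i ∈ Finset.Icc 1 (k - 1),
        (1 -
          ((Finset.univ.filter (fun a : Fin n => (lvl a : ℕ) ≤ i - 1)).card : ℝ) /
          ((Finset.univ.filter (fun a : Fin n => (lvl a : ℕ) ≤ i)).card : ℝ)) := by
  have hchain : (Finset.univ.filter (fun σ : Equiv.Perm (Fin n) => ChainOfLevels lvl σ)) =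
      (Finset.univ.filter (Cond lvl (k - 1))) := by
    apply Finset.filter_congr
    intro σ _
    constructor
    · intro hC i hi1 hik
      have hik' : i < k := by omega
      obtain ⟨t, ht1, ht2⟩ := hC ⟨i, hik'⟩ hi1
      exact ⟨t, by rw [ht1], ht2⟩
    · intro hC I hI
      have hIlt := I.isLt
      obtain ⟨t, ht1, ht2⟩ := hC (I : ℕ) hI (by omega)
      exact ⟨t, Fin.ext (by rw [ht1]), ht2⟩
  rw [hchain]
  have key := count lvl hk hfull (k - 1)
  -- positivity facts
  have hLpos : ∀ i ∈ Finset.Icc 1 (k - 1),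
      0 < (Finset.univ.filter fun a : Fin n => (lvl a : ℕ) = i).card := by
    intro i hi
    rw [Finset.mem_Icc] at hi
    have hik : i < k := by omega
    have h0 := hfull ⟨i, hik⟩
    have he : (Finset.univ.filter (fun a : Fin n => lvl a = (⟨i, hik⟩ : Fin k))) =
        (Finset.univ.filter fun a : Fin n => (lvl a : ℕ) = i) := by
      apply Finset.filter_congr
      intro a _
      rw [Fin.ext_iff]
    rwa [he] at h0
  have hNpos : ∀ i ∈ Finset.Icc 1 (k - 1),
      0 < (Finset.univ.filter fun a : Fin n => (lvl a : ℕ) ≤ i).card := by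
    intro i hi
    refine lt_of_lt_of_le (hLpos i hi) (Finset.card_le_card ?_)
    intro a ha
    rw [Finset.mem_filter] at ha ⊢
    exact ⟨ha.1, le_of_eq ha.2⟩
  have hsum : ∀ i ∈ Finset.Icc 1 (k - 1),
      (Finset.univ.filter fun a : Fin n => (lvl a : ℕ) ≤ i).card =
      (Finset.univ.filter fun a : Fin n => (lvl a : ℕ) ≤ i - 1).card +
      (Finset.univ.filter fun a : Fin n => (lvl a : ℕ) = i).card := by
    intro i hi
    rw [Finset.mem_Icc] at hi
    have hu : (Finset.univ.filter fun a : Fin n => (lvl a : ℕ) ≤ i) =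
        (Finset.univ.filter fun a : Fin n => (lvl a : ℕ) ≤ i - 1) ∪
        (Finset.univ.filter fun a : Fin n => (lvl a : ℕ) = i) := by
      ext a
      simp only [Finset.mem_filter, Finset.mem_univ, true_and, Finset.mem_union]
      omega
    rw [hu, Finset.card_union_of_disjoint]
    rw [Finset.disjoint_left]
    intro a ha hb
    rw [Finset.mem_filter] at ha hb
    omega
  have factor : ∀ i ∈ Finset.Icc 1 (k - 1),
      (1 - ((Finset.univ.filter (fun a : Fin n => (lvl a : ℕ) ≤ i - 1)).card : ℝ) /
        ((Finset.univ.filter (fun a : Fin n => (lvl a : ℕ) ≤ i)).card : ℝ)) =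
      ((Finset.univ.filter (fun a : Fin n => (lvl a : ℕ) = i)).card : ℝ) /
        ((Finset.univ.filter (fun a : Fin n => (lvl a : ℕ) ≤ i)).card : ℝ) := by
    intro i hi
    have hN : ((Finset.univ.filter (fun a : Fin n => (lvl a : ℕ) ≤ i)).card : ℝ) ≠ 0 := by
      exact_mod_cast (hNpos i hi).ne'
    have hs := hsum i hi
    field_simp
    have : ((Finset.univ.filter fun a : Fin n => (lvl a : ℕ) ≤ i).card : ℝ) =
        ((Finset.univ.filter fun a : Fin n => (lvl a : ℕ) ≤ i - 1).card : ℝ) +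
        ((Finset.univ.filter fun a : Fin n => (lvl a : ℕ) = i).card : ℝ) := by
      exact_mod_cast congrArg (Nat.cast : ℕ → ℝ) hs
    linarith
  rw [Finset.prod_congr rfl factor, Finset.prod_div_distrib]
  have hfac : ((Nat.factorial n : ℕ) : ℝ) ≠ 0 := by
    exact_mod_cast (Nat.factorial_pos n).ne'
  have hprod : (∏ i ∈ Finset.Icc 1 (k - 1),
      ((Finset.univ.filter (fun a : Fin n => (lvl a : ℕ) ≤ i)).card : ℝ)) ≠ 0 := by
    apply ne_of_gt
    apply Finset.prod_pos
    intro i hi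
    exact_mod_cast hNpos i hi
  rw [div_eq_div_iff hfac hprod]
  exact_mod_cast key.trans (Nat.mul_comm _ _)

/-- The probability that a uniformly random ordering of agents partitioned into levels
`0, …, k − 1` (each level nonempty) has the chain-of-levels property equals
`∏_{i = 1}^{k − 1} (1 − n_{i−1} / n_i)`, where `n_i` is the number of agents in levels
`0` through `i`. -/
theorem chain_of_levels_probability {n k : ℕ} (hk : 0 < k) (lvl : Fin n → Fin k)
    (hfull : ∀ i : Fin k, 0 < (Finset.univ.filter (fun a => lvl a = i)).card) :
    ((Finset.univ.filter (fun σ : Equiv.Perm (Fin n) => ChainOfLevels lvl σ)).card : ℝ)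
        / (Nat.factorial n : ℝ) =
      ∏ i ∈ Finset.Icc 1 (k - 1),
        (1 -
          ((Finset.univ.filter (fun a : Fin n => (lvl a : ℕ) ≤ i - 1)).card : ℝ) /
          ((Finset.univ.filter (fun a : Fin n => (lvl a : ℕ) ≤ i)).card : ℝ)) :=
  chain_of_levels_probability' hk lvl hfull
end

section
/- Consider the facility assignment instance on the real line with k+1 facilities, where the level-0 facility has capacity c_0 = 1 and is located at −ε (for ε > 0), the level-i facility for i = 1, …, k−1 is located at 2^i with capacity c_i = 1 + 2·3^(i−1), the level-k facility is located at 2^k with capacity 1, and where there is ℓ_0 = 1 agent at point 1 (level 0) and ℓ_i = 1 + 2·3^(i−1) agents at point 2^i (level i) for i = 1, …, k−1. If Serial Dictatorship is applied with an ordering of the agents that has the chain-of-levels property, then for each i = 0, 1, …, k−1 at least one agent of level i is assigned to the facility of level i+1; consequently the resulting social cost is at least 2^k − 1. -/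
/-- A facility assignment instance: `n` agents with most-preferred points `A`,
`m` facilities at points `F` with capacities `c`. -/
structure FAInstance (X : Type*) (n m : ℕ) where
  A : Fin n → X
  F : Fin m → X
  c : Fin m → ℕ

/-- An assignment is valid if no facility receives more agents than its capacity. -/
def ValidAssignment {X : Type*} {n m : ℕ} (I : FAInstance X n m)
    (S : Fin n → Fin m) : Prop :=
  ∀ j : Fin m, (Finset.univ.filter (fun i => S i = j)).card ≤ I.c j

/-- The social cost of an assignment: the sum of agents' distances to their facilities. -/
noncomputable def socialCost {X : Type*} [MetricSpace X] {n m : ℕ}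
    (I : FAInstance X n m) (S : Fin n → Fin m) : ℝ :=
  ∑ i, dist (I.A i) (I.F (S i))

/-- The `g`-augmented instance: every capacity is multiplied by `g`. -/
def FAInstance.augment {X : Type*} {n m : ℕ} (I : FAInstance X n m) (g : ℕ) :
    FAInstance X n m :=
  ⟨I.A, I.F, fun j => g * I.c j⟩

/-- `S` is an outcome of Serial Dictatorship run with the ordering `σ`
(`σ t` is the agent served at time `t`): the assignment is valid, and each agent is
assigned to a facility at minimum distance among the facilities that still have
residual capacity when her turn comes. -/
def IsSDWithOrder {X : Type*} [MetricSpace X] {n m : ℕ} (I : FAInstance X n m)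
    (σ : Equiv.Perm (Fin n)) (S : Fin n → Fin m) : Prop :=
  ValidAssignment I S ∧
  ∀ t : Fin n, ∀ j : Fin m,
    (Finset.univ.filter (fun s : Fin n => s < t ∧ S (σ s) = j)).card < I.c j →
    dist (I.A (σ t)) (I.F (S (σ t))) ≤ dist (I.A (σ t)) (I.F j)

/-- `S` is an outcome of Serial Dictatorship for some ordering of the agents
and some tie-breaking. -/
def IsSDAssignment {X : Type*} [MetricSpace X] {n m : ℕ} (I : FAInstance X n m)
    (S : Fin n → Fin m) : Prop :=
  ∃ σ : Equiv.Perm (Fin n), IsSDWithOrder I σ S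
/-- Positions (strictly before `t`) whose agent is assigned to facility `j`. -/
def OccSet {n m : ℕ} (σ : Equiv.Perm (Fin n)) (S : Fin n → Fin m) (j : Fin m)
    (t : Fin n) : Finset (Fin n) :=
  Finset.univ.filter (fun s => s < t ∧ S (σ s) = j)

/-- Positions before `t` whose agent is assigned to a facility with index in `[1, mm]`. -/
def OccUpToSet {n m : ℕ} (σ : Equiv.Perm (Fin n)) (S : Fin n → Fin m) (mm : ℕ)
    (t : Fin n) : Finset (Fin n) :=
  Finset.univ.filter (fun s => s < t ∧ 1 ≤ (S (σ s) : ℕ) ∧ (S (σ s) : ℕ) ≤ mm)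

/-- The key invariant: the agent served at time `t` is assigned either to the facility
one level above her own, or (if her level is positive) to her own facility. -/
def GoodAt {n k : ℕ} (lvl : Fin n → Fin k) (σ : Equiv.Perm (Fin n))
    (S : Fin n → Fin (k + 1)) (t : Fin n) : Prop :=
  (S (σ t) : ℕ) = (lvl (σ t) : ℕ) + 1 ∨
    ((S (σ t) : ℕ) = (lvl (σ t) : ℕ) ∧ 0 < (lvl (σ t) : ℕ))

set_option maxHeartbeats 1000000 in
/-- On the lower-bound instance on the real line — facility of level 0 at `−ε` with
capacity 1, facility of level `i` (`1 ≤ i ≤ k − 1`) at `2 ^ i` with capacity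
`1 + 2 · 3 ^ (i − 1)`, facility of level `k` at `2 ^ k` with capacity 1, one agent of
level 0 at `1` and `1 + 2 · 3 ^ (i − 1)` agents of level `i` at `2 ^ i` — if Serial
Dictatorship is run with an ordering having the chain-of-levels property, then for each
`i < k` at least one agent of level `i` is assigned to the facility of level `i + 1`,
and the resulting social cost is at least `2 ^ k − 1`. -/

theorem sd_chain_of_levels_instance (k : ℕ) (hk : 0 < k) (ε : ℝ) (hε : 0 < ε)
    {n : ℕ} (lvl : Fin n → Fin k)
    (hl0 : (Finset.univ.filter (fun a : Fin n => (lvl a : ℕ) = 0)).card = 1)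
    (hli : ∀ i : Fin k, 0 < (i : ℕ) →
      (Finset.univ.filter (fun a : Fin n => lvl a = i)).card = 1 + 2 * 3 ^ ((i : ℕ) - 1))
    (I : FAInstance ℝ n (k + 1))
    (hA : ∀ a : Fin n, I.A a = if (lvl a : ℕ) = 0 then 1 else 2 ^ (lvl a : ℕ))
    (hF0 : I.F 0 = -ε)
    (hFi : ∀ j : Fin (k + 1), 0 < (j : ℕ) → I.F j = 2 ^ (j : ℕ))
    (hc0 : I.c 0 = 1)
    (hck : I.c (Fin.last k) = 1)
    (hci : ∀ j : Fin (k + 1), 0 < (j : ℕ) → (j : ℕ) < k →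
      I.c j = 1 + 2 * 3 ^ ((j : ℕ) - 1))
    (σ : Equiv.Perm (Fin n)) (hchain : ChainOfLevels lvl σ)
    (S : Fin n → Fin (k + 1)) (hS : IsSDWithOrder I σ S) :
    (∀ i : ℕ, i < k → ∃ a : Fin n, (lvl a : ℕ) = i ∧ (S a : ℕ) = i + 1) ∧
    (2 : ℝ) ^ k - 1 ≤ socialCost I S := by
  classical
  obtain ⟨hvalid, hminSD⟩ := hS
  have hpow2pos : ∀ p : ℕ, (0:ℝ) < 2 ^ p := fun p => pow_pos two_pos p
  have hpowlt : ∀ {p q : ℕ}, p < q → (2:ℝ) ^ p < 2 ^ q := fun {p q} h =>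
    pow_lt_pow_right₀ one_lt_two h
  have hA2 : ∀ a : Fin n, I.A a = 2 ^ (lvl a : ℕ) := by
    intro a; rw [hA a]; split
    · next h => rw [h]; norm_num
    · rfl
  have hd2 : ∀ p : ℕ, dist ((2:ℝ) ^ p) ((2:ℝ) ^ (p + 1)) = 2 ^ p := by
    intro p
    rw [Real.dist_eq, pow_succ, abs_of_nonpos (by nlinarith [hpow2pos p])]
    ring
  have hj0 : ∀ j : Fin (k + 1), (j : ℕ) = 0 → j = 0 := by
    intro j h; exact Fin.ext (by simpa using h)
  have hFle : ∀ (j : Fin (k + 1)) (r : ℕ), dist ((2:ℝ) ^ r) (I.F j) ≤ 2 ^ r →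
      1 ≤ (j : ℕ) ∧ (j : ℕ) ≤ r + 1 := by
    intro j r hdle
    rcases Nat.eq_zero_or_pos (j : ℕ) with h0 | hpos
    · exfalso
      rw [hj0 j h0, hF0, Real.dist_eq] at hdle
      have := hpow2pos r
      rw [abs_of_pos (by linarith)] at hdle
      linarith
    · refine ⟨hpos, ?_⟩
      by_contra hgt
      push_neg at hgt
      rw [hFi j hpos, Real.dist_eq] at hdle
      have h1 : (2:ℝ) ^ (r + 2) ≤ 2 ^ (j : ℕ) := pow_le_pow_right₀ one_le_two (by omega)
      have h2 : (2:ℝ) ^ (r + 2) = 4 * 2 ^ r := by rw [pow_succ, pow_succ]; ring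
      have h3 := hpow2pos r
      rw [abs_of_nonpos (by linarith)] at hdle
      linarith
  have hFeq : ∀ (j : Fin (k + 1)) (r : ℕ), dist ((2:ℝ) ^ r) (I.F j) ≤ 0 → (j : ℕ) = r := by
    intro j r hdle
    have hd0 : dist ((2:ℝ) ^ r) (I.F j) = 0 := le_antisymm hdle dist_nonneg
    have hFj : (2:ℝ) ^ r = I.F j := dist_eq_zero.1 hd0
    rcases Nat.eq_zero_or_pos (j : ℕ) with h0 | hpos
    · exfalso
      rw [hj0 j h0, hF0] at hFj
      have := hpow2pos r
      linarith
    · rw [hFi j hpos] at hFj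
      by_contra hne
      rcases Nat.lt_or_ge (j : ℕ) r with h | h
      · exact absurd hFj.symm (ne_of_lt (hpowlt h))
      · exact absurd hFj (ne_of_lt (hpowlt (by omega)))
  have hOccMem : ∀ (j : Fin (k + 1)) (t s : Fin n),
      s ∈ OccSet σ S j t ↔ s < t ∧ S (σ s) = j := by
    intro j t s; simp [OccSet]
  have hInjCap : ∀ (j : Fin (k + 1)) (T : Finset (Fin n)),
      (∀ s ∈ T, S (σ s) = j) → T.card ≤ I.c j := by
    intro j T hT
    refine le_trans (Finset.card_le_card_of_injOn (fun s => σ s) ?_ ?_) (hvalid j)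
    · intro s hs; simp [hT s hs]
    · intro x _ y _ h; exact σ.injective h
  have hcnt_le : ∀ (j : Fin (k + 1)) (t : Fin n), (OccSet σ S j t).card ≤ I.c j :=
    fun j t => hInjCap j _ (fun s hs => ((hOccMem j t s).1 hs).2)
  have hself : ∀ t : Fin n, (OccSet σ S (S (σ t)) t).card < I.c (S (σ t)) := by
    intro t
    have hnotmem : t ∉ OccSet σ S (S (σ t)) t := by simp [OccSet]
    have h := hInjCap (S (σ t)) (insert t (OccSet σ S (S (σ t)) t)) ?_
    · rw [Finset.card_insert_of_notMem hnotmem] at h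
      omega
    · intro s hs
      rcases Finset.mem_insert.1 hs with rfl | hs
      · rfl
      · exact ((hOccMem _ _ _).1 hs).2
  have hmono : ∀ (j : Fin (k + 1)) (t1 t2 : Fin n), t1 ≤ t2 →
      (OccSet σ S j t1).card ≤ (OccSet σ S j t2).card := by
    intro j t1 t2 h
    apply Finset.card_le_card
    intro s hs
    rw [hOccMem] at hs ⊢
    exact ⟨lt_of_lt_of_le hs.1 h, hs.2⟩
  have hmin : ∀ (t : Fin n) (j : Fin (k + 1)), (OccSet σ S j t).card < I.c j →
      dist (I.A (σ t)) (I.F (S (σ t))) ≤ dist (I.A (σ t)) (I.F j) := by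
    intro t j h
    exact hminSD t j (by simpa [OccSet] using h)
  have hfullc : ∀ (t : Fin n) (j : Fin (k + 1)),
      dist (I.A (σ t)) (I.F j) < dist (I.A (σ t)) (I.F (S (σ t))) →
      I.c j ≤ (OccSet σ S j t).card := by
    intro t j h
    by_contra hc
    push_neg at hc
    exact absurd (hmin t j hc) (not_le.2 h)
  have hlevN : ∀ m : ℕ, 0 < m → m < k →
      (Finset.univ.filter (fun a : Fin n => (lvl a : ℕ) = m)).card = 1 + 2 * 3 ^ (m - 1) := by
    intro m hm hmk
    have h1 : (Finset.univ.filter (fun a : Fin n => (lvl a : ℕ) = m))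
        = (Finset.univ.filter (fun a : Fin n => lvl a = ⟨m, hmk⟩)) := by
      apply Finset.filter_congr
      intro a _
      simp [Fin.ext_iff]
    rw [h1]
    exact hli ⟨m, hmk⟩ hm
  have hLsum : ∀ m : ℕ, m < k →
      (Finset.univ.filter (fun a : Fin n => (lvl a : ℕ) ≤ m)).card = m + 3 ^ m := by
    intro m
    induction m with
    | zero =>
      intro _
      have h1 : (Finset.univ.filter (fun a : Fin n => (lvl a : ℕ) ≤ 0))
          = (Finset.univ.filter (fun a : Fin n => (lvl a : ℕ) = 0)) := by
        apply Finset.filter_congr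
        intro a _
        constructor <;> omega
      rw [h1, hl0]
      norm_num
    | succ m ih =>
      intro h
      have hsplit : (Finset.univ.filter (fun a : Fin n => (lvl a : ℕ) ≤ m + 1))
          = (Finset.univ.filter (fun a : Fin n => (lvl a : ℕ) ≤ m))
            ∪ (Finset.univ.filter (fun a : Fin n => (lvl a : ℕ) = m + 1)) := by
        ext x
        simp only [Finset.mem_filter, Finset.mem_union, Finset.mem_univ, true_and]
        omega
      have hdisj : Disjoint (Finset.univ.filter (fun a : Fin n => (lvl a : ℕ) ≤ m))
          (Finset.univ.filter (fun a : Fin n => (lvl a : ℕ) = m + 1)) := by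
        rw [Finset.disjoint_left]
        intro x hx hy
        simp only [Finset.mem_filter, Finset.mem_univ, true_and] at hx hy
        omega
      rw [hsplit, Finset.card_union_of_disjoint hdisj, ih (by omega), hlevN (m + 1) (by omega) h]
      have h3 : 3 ^ (m + 1) = 3 ^ m * 3 := pow_succ 3 m
      have he : 3 ^ (m + 1 - 1) = 3 ^ m := by rw [Nat.add_sub_cancel]
      omega
  have hntot : n = (k - 1) + 3 ^ (k - 1) := by
    have huniv : (Finset.univ.filter (fun a : Fin n => (lvl a : ℕ) ≤ k - 1)) = Finset.univ := by
      apply Finset.filter_true_of_mem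
      intro a _
      have := (lvl a).isLt
      omega
    have h := hLsum (k - 1) (by omega)
    rw [huniv, Finset.card_univ, Fintype.card_fin] at h
    exact h
  have hcapN : ∀ (m : ℕ) (h1 : 0 < m) (h2 : m < k), I.c ⟨m, Nat.lt_succ_of_lt h2⟩ = 1 + 2 * 3 ^ (m - 1) :=
    fun m h1 h2 => hci ⟨m, Nat.lt_succ_of_lt h2⟩ h1 h2
  have hcapK : I.c ⟨k, Nat.lt_succ_self k⟩ = 1 := hck
  have hOccLB : ∀ (t : Fin n) (m : ℕ), ∀ hmk : m < k,
      (∀ jm : ℕ, 0 < jm → ∀ h2 : jm ≤ m,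
        I.c ⟨jm, Nat.lt_succ_of_lt (Nat.lt_of_le_of_lt h2 hmk)⟩
          ≤ (OccSet σ S ⟨jm, Nat.lt_succ_of_lt (Nat.lt_of_le_of_lt h2 hmk)⟩ t).card) →
      m + 3 ^ m ≤ (OccUpToSet σ S m t).card + 1 := by
    intro t m
    induction m with
    | zero =>
      intro _ _
      have h30 : (3:ℕ) ^ 0 = 1 := pow_zero 3
      omega
    | succ m ih =>
      intro hmk hfull
      have h1 := ih (Nat.lt_of_succ_lt hmk) (fun jm hjm hle => hfull jm hjm (Nat.le_succ_of_le hle))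
      have hsplit : OccUpToSet σ S (m + 1) t
          = OccUpToSet σ S m t ∪ OccSet σ S ⟨m + 1, Nat.lt_succ_of_lt hmk⟩ t := by
        ext s
        simp only [OccUpToSet, OccSet, Finset.mem_filter, Finset.mem_union, Finset.mem_univ,
          true_and, Fin.ext_iff]
        constructor
        · rintro ⟨hst, hge, hle⟩
          rcases Nat.lt_or_ge ((S (σ s)) : ℕ) (m + 1) with hc | hc
          · exact Or.inl ⟨hst, hge, by omega⟩
          · exact Or.inr ⟨hst, by omega⟩
        · rintro (⟨hst, hge, hle⟩ | ⟨hst, heq⟩)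
          · exact ⟨hst, hge, by omega⟩
          · exact ⟨hst, by omega, by omega⟩
      have hdisj : Disjoint (OccUpToSet σ S m t) (OccSet σ S ⟨m + 1, Nat.lt_succ_of_lt hmk⟩ t) := by
        rw [Finset.disjoint_left]
        intro s hs1 hs2
        simp only [OccUpToSet, OccSet, Finset.mem_filter, Finset.mem_univ, true_and,
          Fin.ext_iff] at hs1 hs2
        omega
      have hcc : (OccUpToSet σ S (m + 1) t).card
          = (OccUpToSet σ S m t).card + (OccSet σ S ⟨m + 1, Nat.lt_succ_of_lt hmk⟩ t).card := by
        rw [hsplit, Finset.card_union_of_disjoint hdisj]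
      have hc2 := hfull (m + 1) (Nat.succ_pos m) (le_refl _)
      have hcv : I.c ⟨m + 1, Nat.lt_succ_of_lt hmk⟩ = 1 + 2 * 3 ^ m := hcapN (m + 1) (Nat.succ_pos m) hmk
      have h3 : 3 ^ (m + 1) = 3 ^ m * 3 := pow_succ 3 m
      omega
  -- the key invariant, by strong induction on positions
  have hGood : ∀ t : Fin n, GoodAt lvl σ S t := by
    have main : ∀ (N : ℕ) (t : Fin n), (t : ℕ) < N → GoodAt lvl σ S t := by
      intro N
      induction N with
      | zero => intro t h; omega
      | succ N ihN =>
        intro t htN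
        rcases Nat.lt_or_ge (t : ℕ) N with hltN | _
        · exact ihN t hltN
        have IH : ∀ s : Fin n, s < t → GoodAt lvl σ S s := by
          intro s hs
          refine ihN s ?_
          rw [Fin.lt_def] at hs
          omega
        unfold GoodAt
        set r := ((lvl (σ t)) : ℕ) with hrdef
        have hrk : r < k := (lvl (σ t)).isLt
        have hrK : r < k + 1 := Nat.lt_succ_of_lt hrk
        have hrK1 : r + 1 < k + 1 := Nat.succ_lt_succ hrk
        have hAa : I.A (σ t) = 2 ^ r := hA2 (σ t)
        have occLvl : ∀ (j : ℕ) (hj : j < k + 1) (s : Fin n), s ∈ OccSet σ S ⟨j, hj⟩ t →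
            (lvl (σ s) : ℕ) + 1 = j ∨ ((lvl (σ s) : ℕ) = j ∧ 0 < j) := by
          intro j hj s hs
          rw [hOccMem] at hs
          have hg := IH s hs.1
          have hSv : (S (σ s) : ℕ) = j := by rw [hs.2]
          unfold GoodAt at hg
          rcases hg with h | h
          · left; omega
          · right; exact ⟨by omega, by omega⟩
        have spill : ∀ (j : ℕ), 0 < j → ∀ h2 : j < k,
            I.c ⟨j, Nat.lt_succ_of_lt h2⟩ ≤ (OccSet σ S ⟨j, Nat.lt_succ_of_lt h2⟩ t).card →
            ∀ (x : Fin n), (lvl x : ℕ) = j →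
            (∀ s ∈ OccSet σ S ⟨j, Nat.lt_succ_of_lt h2⟩ t, σ s ≠ x) →
            ∃ b : Fin n, (lvl b : ℕ) = j - 1 ∧ (S b : ℕ) = j ∧ σ.symm b < t := by
          intro j h1 h2 hfull x hx hxno
          have hcard : ((OccSet σ S ⟨j, Nat.lt_succ_of_lt h2⟩ t).filter (fun s => (lvl (σ s) : ℕ) = j)).card
              ≤ ((Finset.univ.filter (fun a : Fin n => (lvl a : ℕ) = j)).erase x).card := by
            apply Finset.card_le_card_of_injOn (fun s => σ s)
            · intro s hs
              simp only [Finset.mem_coe, Finset.mem_filter] at hs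
              refine Finset.mem_erase.2 ⟨hxno s hs.1, ?_⟩
              simp [hs.2]
            · intro x1 _ x2 _ h
              exact σ.injective h
          have hx_mem : x ∈ Finset.univ.filter (fun a : Fin n => (lvl a : ℕ) = j) := by
            simp [hx]
          have herase := Finset.card_erase_of_mem hx_mem
          have hlc := hlevN j h1 h2
          have hcfull : I.c ⟨j, Nat.lt_succ_of_lt h2⟩ = 1 + 2 * 3 ^ (j - 1) := hcapN j h1 h2
          have hsplitc := Finset.card_filter_add_card_filter_not
            (s := OccSet σ S ⟨j, Nat.lt_succ_of_lt h2⟩ t) (p := fun s => (lvl (σ s) : ℕ) = j)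
          have hcle := hcnt_le ⟨j, Nat.lt_succ_of_lt h2⟩ t
          have hpos : 0 < ((OccSet σ S ⟨j, Nat.lt_succ_of_lt h2⟩ t).filter
              (fun s => ¬ (lvl (σ s) : ℕ) = j)).card := by omega
          obtain ⟨s, hs⟩ := Finset.card_pos.1 hpos
          simp only [Finset.mem_filter] at hs
          obtain ⟨hsO, hsl⟩ := hs
          have hocc := occLvl j (Nat.lt_succ_of_lt h2) s hsO
          have hlv : (lvl (σ s) : ℕ) = j - 1 := by
            rcases hocc with h | h
            · omega
            · exact absurd h.1 hsl
          refine ⟨σ s, hlv, ?_, ?_⟩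
          · have hseq := ((hOccMem _ t s).1 hsO).2
            rw [hseq]
          · rw [Equiv.symm_apply_apply]
            exact ((hOccMem _ t s).1 hsO).1
        by_cases hCase : 0 < r ∧ ¬ I.c ⟨r, hrK⟩ ≤ (OccSet σ S ⟨r, hrK⟩ t).card
        · obtain ⟨hr0, hnf⟩ := hCase
          have hle := hmin t ⟨r, hrK⟩ (by omega)
          have hFr : I.F ⟨r, hrK⟩ = 2 ^ r := hFi ⟨r, hrK⟩ hr0
          rw [hAa, hFr, dist_self] at hle
          right
          exact ⟨hFeq (S (σ t)) r hle, hr0⟩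
        · have hfull_r : 0 < r → I.c ⟨r, hrK⟩ ≤ (OccSet σ S ⟨r, hrK⟩ t).card := by
            intro h0
            by_contra hnf
            exact hCase ⟨h0, hnf⟩
          have casc : ∀ (d j : ℕ), ∀ h1 : 0 < j, ∀ h2 : j + d = r,
              I.c ⟨j, Nat.lt_succ_of_lt (Nat.lt_of_le_of_lt (Nat.le.intro h2) hrk)⟩
                ≤ (OccSet σ S ⟨j, Nat.lt_succ_of_lt (Nat.lt_of_le_of_lt (Nat.le.intro h2) hrk)⟩ t).card ∧
              ∃ b : Fin n, (lvl b : ℕ) = j - 1 ∧ (S b : ℕ) = j ∧ σ.symm b < t := by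
            intro d
            induction d with
            | zero =>
              intro j hj hjr
              have hjr' : j = r := by omega
              subst hjr'
              refine ⟨hfull_r hj, ?_⟩
              refine spill r hj hrk (hfull_r hj) (σ t) hrdef.symm ?_
              intro s hs h
              have hst : s = t := σ.injective h
              have := ((hOccMem _ t s).1 hs).1
              rw [hst] at this
              exact lt_irrefl t this
            | succ d ihd =>
              intro j hj hjr
              obtain ⟨hfull1, b, hlb, hSb, hbt⟩ := ihd (j + 1) (by omega) (by omega)
              have hlb' : (lvl b : ℕ) = j := by omega
              have hjk : j < k := by omega
              have hjK : j < k + 1 := Nat.lt_succ_of_lt hjk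
              have hdistb : dist (I.A (σ (σ.symm b))) (I.F ⟨j, hjK⟩)
                  < dist (I.A (σ (σ.symm b))) (I.F (S (σ (σ.symm b)))) := by
                rw [Equiv.apply_symm_apply, hA2 b, hlb']
                have hF1 : I.F ⟨j, hjK⟩ = 2 ^ j := hFi ⟨j, hjK⟩ hj
                have hF2 : I.F (S b) = 2 ^ (j + 1) := by
                  rw [hFi (S b) (by omega), hSb]
                rw [hF1, hF2, dist_self, hd2 j]
                exact hpow2pos j
              have hfullj : I.c ⟨j, hjK⟩ ≤ (OccSet σ S ⟨j, hjK⟩ t).card :=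
                le_trans (hfullc (σ.symm b) ⟨j, hjK⟩ hdistb)
                  (hmono _ _ _ (le_of_lt hbt))
              refine ⟨hfullj, ?_⟩
              refine spill j hj hjk hfullj b hlb' ?_
              intro s hs h
              have hSs := ((hOccMem _ t s).1 hs).2
              rw [h] at hSs
              have := congrArg Fin.val hSs
              simp at this
              omega
          have hfulls : ∀ jm : ℕ, ∀ h1 : 0 < jm, ∀ h2 : jm ≤ r,
              I.c ⟨jm, Nat.lt_succ_of_lt (Nat.lt_of_le_of_lt h2 hrk)⟩
                ≤ (OccSet σ S ⟨jm, Nat.lt_succ_of_lt (Nat.lt_of_le_of_lt h2 hrk)⟩ t).card := by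
            intro jm h1 h2
            exact (casc (r - jm) jm h1 (by omega)).1
          have hnotfull : (OccSet σ S ⟨r + 1, hrK1⟩ t).card < I.c ⟨r + 1, hrK1⟩ := by
            rcases Nat.lt_or_ge (r + 1) k with hrk1 | hrk1
            · by_contra hfl
              push_neg at hfl
              have hfulls' : ∀ jm : ℕ, 0 < jm → ∀ h2 : jm ≤ r + 1,
                  I.c ⟨jm, Nat.lt_succ_of_lt (Nat.lt_of_le_of_lt h2 hrk1)⟩
                    ≤ (OccSet σ S ⟨jm, Nat.lt_succ_of_lt (Nat.lt_of_le_of_lt h2 hrk1)⟩ t).card := by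
                intro jm h1 h2
                rcases Nat.lt_or_ge jm (r + 1) with hc | hc
                · exact hfulls jm h1 (by omega)
                · have hv : jm = r + 1 := by omega
                  subst hv
                  exact hfl
              have hLB := hOccLB t (r + 1) hrk1 hfulls'
              obtain ⟨t1, ht1l, ht1g⟩ := hchain ⟨r + 1, hrk1⟩ (Nat.succ_pos r)
              have ht1v : (lvl (σ t1) : ℕ) = r + 1 := by rw [ht1l]
              have htlt : t < t1 := ht1g t (by omega)
              have hUB : (OccUpToSet σ S (r + 1) t).card ≤
                  (((Finset.univ.filter (fun b : Fin n => (lvl b : ℕ) ≤ r + 1)).erase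
                    (σ t)).erase (σ t1)).card := by
                apply Finset.card_le_card_of_injOn (fun s => σ s)
                · intro s hs
                  simp only [OccUpToSet, Finset.mem_coe, Finset.mem_filter, Finset.mem_univ, true_and] at hs
                  obtain ⟨hst, hS1, hS2⟩ := hs
                  have hg := IH s hst
                  unfold GoodAt at hg
                  have hlvls : (lvl (σ s) : ℕ) ≤ r + 1 := by
                    rcases hg with h | h <;> omega
                  refine Finset.mem_erase.2 ⟨?_, Finset.mem_erase.2 ⟨?_, by simp [hlvls]⟩⟩
                  · intro hcon
                    have hst1 : s = t1 := σ.injective hcon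
                    rw [Fin.lt_def] at hst htlt
                    rw [Fin.ext_iff] at hst1
                    omega
                  · intro hcon
                    have hst' : s = t := σ.injective hcon
                    rw [hst'] at hst
                    exact lt_irrefl t hst
                · intro x1 _ x2 _ h
                  exact σ.injective h
              have hmem_a : σ t ∈ Finset.univ.filter (fun b : Fin n => (lvl b : ℕ) ≤ r + 1) := by
                simp only [Finset.mem_filter, Finset.mem_univ, true_and]
                omega
              have hmem_t1 : σ t1 ∈ (Finset.univ.filter
                  (fun b : Fin n => (lvl b : ℕ) ≤ r + 1)).erase (σ t) := by
                refine Finset.mem_erase.2 ⟨?_, ?_⟩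
                · intro hcon
                  have := congrArg (fun z => (lvl z : ℕ)) hcon
                  omega
                · simp only [Finset.mem_filter, Finset.mem_univ, true_and]
                  omega
              have hc1 := Finset.card_erase_of_mem hmem_t1
              have hc2 := Finset.card_erase_of_mem hmem_a
              have hLv := hLsum (r + 1) hrk1
              have h3p : 0 < 3 ^ (r + 1) := pow_pos (by norm_num) _
              omega
            · by_contra hfl
              push_neg at hfl
              have hLB := hOccLB t (k - 1) (by omega)
                (fun jm h1 h2 => hfulls jm h1 (by omega))
              have hfink : (⟨r + 1, hrK1⟩ : Fin (k + 1)) = ⟨k, Nat.lt_succ_self k⟩ :=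
                Fin.ext (by simp; omega)
              rw [hfink] at hfl
              have hsplit : OccUpToSet σ S k t
                  = OccUpToSet σ S (k - 1) t ∪ OccSet σ S ⟨k, Nat.lt_succ_self k⟩ t := by
                ext s
                have hv := (S (σ s)).isLt
                simp only [OccUpToSet, OccSet, Finset.mem_filter, Finset.mem_union,
                  Finset.mem_univ, true_and, Fin.ext_iff]
                constructor
                · rintro ⟨hst, hge, hle⟩
                  rcases Nat.lt_or_ge ((S (σ s)) : ℕ) k with hc | hc
                  · exact Or.inl ⟨hst, hge, by omega⟩
                  · exact Or.inr ⟨hst, by omega⟩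
                · rintro (⟨hst, hge, hle⟩ | ⟨hst, heq⟩)
                  · exact ⟨hst, hge, by omega⟩
                  · exact ⟨hst, by omega, by omega⟩
              have hdisj : Disjoint (OccUpToSet σ S (k - 1) t) (OccSet σ S ⟨k, Nat.lt_succ_self k⟩ t) := by
                rw [Finset.disjoint_left]
                intro s hs1 hs2
                simp only [OccUpToSet, OccSet, Finset.mem_filter, Finset.mem_univ, true_and,
                  Fin.ext_iff] at hs1 hs2
                omega
              have hcc : (OccUpToSet σ S k t).card
                  = (OccUpToSet σ S (k - 1) t).card + (OccSet σ S ⟨k, Nat.lt_succ_self k⟩ t).card := by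
                rw [hsplit, Finset.card_union_of_disjoint hdisj]
              have hsub : OccUpToSet σ S k t ⊆ Finset.univ.erase t := by
                intro s hs
                simp only [OccUpToSet, Finset.mem_filter, Finset.mem_univ, true_and] at hs
                exact Finset.mem_erase.2 ⟨ne_of_lt hs.1, Finset.mem_univ s⟩
              have hUB := Finset.card_le_card hsub
              have hcerase : (Finset.univ.erase t).card = n - 1 := by
                rw [Finset.card_erase_of_mem (Finset.mem_univ t), Finset.card_univ,
                  Fintype.card_fin]
              have h3p : 0 < 3 ^ (k - 1) := pow_pos (by norm_num) _
              have hn1 : 0 < n := t.pos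
              omega
          have hle := hmin t ⟨r + 1, hrK1⟩ hnotfull
          have hFr1 : I.F ⟨r + 1, hrK1⟩ = 2 ^ (r + 1) := hFi ⟨r + 1, hrK1⟩ (Nat.succ_pos r)
          rw [hAa, hFr1, hd2 r] at hle
          obtain ⟨hge1, hler1⟩ := hFle (S (σ t)) r hle
          rcases Nat.lt_or_ge ((S (σ t)) : ℕ) (r + 1) with hlt' | hge'
          · exfalso
            have hfj := hfulls ((S (σ t)) : ℕ) (by omega) (by omega)
            have hself' := hself t
            have hfin : (⟨((S (σ t)) : ℕ), _⟩ : Fin (k + 1)) = S (σ t) := Fin.ext rfl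
            rw [hfin] at hfj
            omega
          · left
            omega
    intro t
    exact main ((t : ℕ) + 1) t (Nat.lt_succ_self _)
  -- the global capacity bound on facilities 1..m
  have hVsum : ∀ m : ℕ, m < k →
      (Finset.univ.filter (fun x : Fin n => 1 ≤ (S x : ℕ) ∧ (S x : ℕ) ≤ m)).card + 1
        ≤ m + 3 ^ m := by
    intro m
    induction m with
    | zero =>
      intro _
      have hempty : (Finset.univ.filter
          (fun x : Fin n => 1 ≤ (S x : ℕ) ∧ (S x : ℕ) ≤ 0)) = ∅ := by
        refine Finset.eq_empty_of_forall_notMem ?_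
        intro x hx
        simp only [Finset.mem_filter, Finset.mem_univ, true_and] at hx
        omega
      rw [hempty]
      have h30 : (3:ℕ) ^ 0 = 1 := pow_zero 3
      simp
    | succ m ih =>
      intro hmk
      have h1 := ih (by omega)
      have hsplit : (Finset.univ.filter (fun x : Fin n => 1 ≤ (S x : ℕ) ∧ (S x : ℕ) ≤ m + 1))
          = (Finset.univ.filter (fun x : Fin n => 1 ≤ (S x : ℕ) ∧ (S x : ℕ) ≤ m))
            ∪ (Finset.univ.filter (fun x : Fin n => S x = ⟨m + 1, Nat.lt_succ_of_lt hmk⟩)) := by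
        ext x
        simp only [Finset.mem_filter, Finset.mem_union, Finset.mem_univ, true_and, Fin.ext_iff]
        constructor
        · rintro ⟨hge, hle⟩
          rcases Nat.lt_or_ge ((S x) : ℕ) (m + 1) with hc | hc
          · exact Or.inl ⟨hge, by omega⟩
          · exact Or.inr (by omega)
        · rintro (⟨hge, hle⟩ | heq)
          · exact ⟨hge, by omega⟩
          · exact ⟨by omega, by omega⟩
      have hcard : (Finset.univ.filter
            (fun x : Fin n => 1 ≤ (S x : ℕ) ∧ (S x : ℕ) ≤ m + 1)).card
          ≤ (Finset.univ.filter (fun x : Fin n => 1 ≤ (S x : ℕ) ∧ (S x : ℕ) ≤ m)).card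
            + (Finset.univ.filter (fun x : Fin n => S x = ⟨m + 1, Nat.lt_succ_of_lt hmk⟩)).card := by
        rw [hsplit]
        exact Finset.card_union_le _ _
      have hval := hvalid (⟨m + 1, Nat.lt_succ_of_lt hmk⟩ : Fin (k + 1))
      have hcv : I.c ⟨m + 1, Nat.lt_succ_of_lt hmk⟩ = 1 + 2 * 3 ^ m := hcapN (m + 1) (Nat.succ_pos m) hmk
      have h3 : 3 ^ (m + 1) = 3 ^ m * 3 := pow_succ 3 m
      omega
  have part1 : ∀ i : ℕ, i < k → ∃ x : Fin n, (lvl x : ℕ) = i ∧ (S x : ℕ) = i + 1 := by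
    intro i hik
    by_contra hno
    push_neg at hno
    have hmemV : ∀ x : Fin n, (lvl x : ℕ) ≤ i → 1 ≤ (S x : ℕ) ∧ (S x : ℕ) ≤ i := by
      intro x hx
      have hg := hGood (σ.symm x)
      unfold GoodAt at hg
      rw [Equiv.apply_symm_apply] at hg
      rcases hg with h | h
      · constructor
        · omega
        · by_contra hgt
          push_neg at hgt
          have h1 : (lvl x : ℕ) = i := by omega
          exact hno x h1 (by omega)
      · exact ⟨by omega, by omega⟩
    have hsub : (Finset.univ.filter (fun x : Fin n => (lvl x : ℕ) ≤ i))
        ⊆ (Finset.univ.filter (fun x : Fin n => 1 ≤ (S x : ℕ) ∧ (S x : ℕ) ≤ i)) := by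
      intro x hx
      simp only [Finset.mem_filter, Finset.mem_univ, true_and] at hx ⊢
      exact hmemV x hx
    have h1 := hLsum i hik
    have h2 := hVsum i hik
    have h3 := Finset.card_le_card hsub
    omega
  refine ⟨part1, ?_⟩
  have hw' := fun i : Fin k => part1 (i : ℕ) i.isLt
  choose w hw1 hw2 using hw'
  have hinj : Function.Injective w := by
    intro i j hij
    have hv : (i : ℕ) = (j : ℕ) := by rw [← hw1 i, ← hw1 j, hij]
    exact Fin.ext hv
  have hterm : ∀ i : Fin k, dist (I.A (w i)) (I.F (S (w i))) = 2 ^ (i : ℕ) := by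
    intro i
    have h1 : I.A (w i) = 2 ^ (i : ℕ) := by rw [hA2, hw1]
    have h2 : I.F (S (w i)) = 2 ^ ((i : ℕ) + 1) := by
      rw [hFi (S (w i)) (by rw [hw2 i]; exact Nat.succ_pos _), hw2 i]
    rw [h1, h2, hd2]
  have hsum_eq : ∑ x ∈ Finset.univ.image w, dist (I.A x) (I.F (S x))
      = ∑ i : Fin k, (2:ℝ) ^ (i : ℕ) := by
    rw [Finset.sum_image (fun i _ j _ h => hinj h)]
    exact Finset.sum_congr rfl (fun i _ => hterm i)
  have hmono2 : ∑ x ∈ Finset.univ.image w, dist (I.A x) (I.F (S x)) ≤ socialCost I S := by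
    unfold socialCost
    exact Finset.sum_le_sum_of_subset_of_nonneg (Finset.subset_univ _) (fun x _ _ => dist_nonneg)
  have hgeom : ∑ i : Fin k, (2:ℝ) ^ (i : ℕ) = 2 ^ k - 1 := by
    rw [Fin.sum_univ_eq_sum_range (fun i => (2:ℝ) ^ i) k]
    rw [geom_sum_eq (by norm_num : (2:ℝ) ≠ 1) k]
    norm_num
  linarith
end

section
/- For the facility assignment problem with m = 2 facilities, every truthful-in-expectation randomized mechanism M has approximation ratio at least 3 without resource augmentation: for every α < 3 there exist an instance on the real line (number of agents n, facility positions, capacities, and agent points) on which the expected social cost of M exceeds α times the minimum social cost of any assignment on that instance. -/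
/-- A randomized mechanism for facility assignment with two facilities on the real
line: for each number `n` of agents, facility positions `F`, capacities `c`, and
reported points `A`, it outputs a probability distribution over assignments
(represented by its probability mass function), supported on capacity-respecting
assignments whenever the total capacity suffices, and it is truthful-in-expectation:
no agent can strictly decrease her expected distance to her assigned facility by
misreporting her point. -/
structure TwoFacTruthfulMechanism where
  out : ∀ (n : ℕ), (Fin 2 → ℝ) → (Fin 2 → ℕ) → (Fin n → ℝ) → (Fin n → Fin 2) → ℝ
  nonneg : ∀ (n : ℕ) (F : Fin 2 → ℝ) (c : Fin 2 → ℕ) (A : Fin n → ℝ)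
    (S : Fin n → Fin 2), 0 ≤ out n F c A S
  total_one : ∀ (n : ℕ) (F : Fin 2 → ℝ) (c : Fin 2 → ℕ) (A : Fin n → ℝ),
    n ≤ c 0 + c 1 → ∑ S : Fin n → Fin 2, out n F c A S = 1
  supp_valid : ∀ (n : ℕ) (F : Fin 2 → ℝ) (c : Fin 2 → ℕ) (A : Fin n → ℝ)
    (S : Fin n → Fin 2), n ≤ c 0 + c 1 → out n F c A S ≠ 0 →
    ∀ j : Fin 2, (Finset.univ.filter (fun i => S i = j)).card ≤ c j
  truthful : ∀ (n : ℕ) (F : Fin 2 → ℝ) (c : Fin 2 → ℕ), n ≤ c 0 + c 1 →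
    ∀ (A : Fin n → ℝ) (i : Fin n) (a' : ℝ),
      ∑ S : Fin n → Fin 2, out n F c A S * dist (A i) (F (S i)) ≤
        ∑ S : Fin n → Fin 2, out n F c (Function.update A i a') S * dist (A i) (F (S i))

namespace TwoFacLBAux

lemma filter_zero_one_card (n : ℕ) (S : Fin n → Fin 2) :
    (Finset.univ.filter (fun i => S i = 0)).card
      + (Finset.univ.filter (fun i => S i = 1)).card = n := by
  have h := Finset.card_filter_add_card_filter_not
    (s := (Finset.univ : Finset (Fin n))) (p := fun i => S i = 0)
  have h2 : (Finset.univ.filter (fun i => ¬ S i = 0))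
      = Finset.univ.filter (fun i => S i = 1) := by
    apply Finset.filter_congr
    intro i _
    constructor
    · intro hne; omega
    · intro h1; omega
  rw [h2] at h
  simpa using h

lemma exists_unique_zero (n : ℕ) (hn : 1 ≤ n) (S : Fin n → Fin 2)
    (h0 : (Finset.univ.filter (fun i => S i = 0)).card ≤ 1)
    (h1 : (Finset.univ.filter (fun i => S i = 1)).card ≤ n - 1) :
    ∃ j, ∀ i, S i = 0 ↔ i = j := by
  have hpart := filter_zero_one_card n S
  have hcard : (Finset.univ.filter (fun i => S i = 0)).card = 1 := by omega
  obtain ⟨j, hj⟩ := Finset.card_eq_one.mp hcard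
  refine ⟨j, fun i => ?_⟩
  constructor
  · intro h0i
    have : i ∈ Finset.univ.filter (fun i => S i = 0) := by simp [h0i]
    rw [hj] at this; simpa using this
  · intro h0i; subst h0i
    have : i ∈ ({i} : Finset (Fin n)) := by simp
    rw [← hj] at this; simpa using this

lemma cost_eval (n : ℕ) (k j : Fin n) (ε : ℝ) (hε0 : 0 ≤ ε) (hε1 : ε ≤ 1)
    (B : Fin n → ℝ) (hBk : B k = 1 + ε) (hBo : ∀ i, i ≠ k → B i = 2)
    (F : Fin 2 → ℝ) (hF0 : F 0 = 0) (hF1 : F 1 = 2)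
    (S : Fin n → Fin 2) (hS : ∀ i, S i = 0 ↔ i = j) :
    ∑ i, dist (B i) (F (S i)) = if j = k then 1 + ε else 3 - ε := by
  have d1 : dist (1 + ε) (0:ℝ) = 1 + ε := by
    rw [Real.dist_eq, abs_of_nonneg (by linarith)]; ring
  have d2 : dist (1 + ε) (2:ℝ) = 1 - ε := by
    rw [Real.dist_eq, abs_of_nonpos (by linarith)]; ring
  have d3 : dist (2:ℝ) (0:ℝ) = 2 := by
    rw [Real.dist_eq, abs_of_nonneg (by norm_num)]; ring
  have hterm : ∀ i : Fin n, dist (B i) (F (S i))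
      = (if i = j then (if j = k then 1 + ε else 2) else 0)
        + (if i = k then (if j = k then 0 else 1 - ε) else 0) := by
    intro i
    by_cases hij : i = j
    · subst hij
      have h0 : S i = 0 := (hS i).mpr rfl
      by_cases hik : i = k
      · have hBi : B i = 1 + ε := by rw [hik]; exact hBk
        rw [h0, hF0, if_pos rfl, if_pos hik, if_pos hik, if_pos hik, hBi, d1]; ring
      · rw [h0, hF0, if_pos rfl, if_neg hik, if_neg hik, hBo i hik, d3]; ring
    · have hne : S i ≠ 0 := fun h => hij ((hS i).mp h)
      have h1 : S i = 1 := by omega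
      rw [h1, hF1, if_neg hij]
      by_cases hik : i = k
      · have hjk : j ≠ k := fun h => hij (by rw [hik, h])
        rw [if_pos hik, if_neg (fun h => hjk h), hik, hBk, d2]; ring
      · rw [if_neg hik, hBo i hik, dist_self]; ring
  rw [Finset.sum_congr rfl (fun i _ => hterm i), Finset.sum_add_distrib,
    Finset.sum_ite_eq' Finset.univ j, Finset.sum_ite_eq' Finset.univ k]
  by_cases h : j = k
  · simp only [h, if_pos rfl, Finset.mem_univ, if_true]; ring
  · simp only [h, if_neg h, Finset.mem_univ, if_true, if_false]; ring

lemma expand_sum {ι : Type*} [Fintype ι] (w g : ι → ℝ) (x y : ℝ) :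
    ∑ S : ι, w S * (x + y * g S) = x * (∑ S, w S) + y * (∑ S, w S * g S) := by
  rw [Finset.mul_sum, Finset.mul_sum, ← Finset.sum_add_distrib]
  exact Finset.sum_congr rfl fun S _ => by ring

end TwoFacLBAux

open TwoFacLBAux in
/-- Every truthful-in-expectation randomized mechanism for facility assignment with two
facilities has approximation ratio at least 3 (without resource augmentation): for every
`α < 3` there is an instance on the real line on which the mechanism's expected social
cost exceeds `α` times the minimum social cost. -/
theorem two_facilities_truthful_lower_bound (M : TwoFacTruthfulMechanism)
    (α : ℝ) (hα : α < 3) :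
    ∃ (n : ℕ) (F : Fin 2 → ℝ) (c : Fin 2 → ℕ) (A : Fin n → ℝ),
      n ≤ c 0 + c 1 ∧
      ∃ O : Fin n → Fin 2,
        (∀ j : Fin 2, (Finset.univ.filter (fun i => O i = j)).card ≤ c j) ∧
        (∀ O' : Fin n → Fin 2,
          (∀ j : Fin 2, (Finset.univ.filter (fun i => O' i = j)).card ≤ c j) →
          ∑ i, dist (A i) (F (O i)) ≤ ∑ i, dist (A i) (F (O' i))) ∧
        α * ∑ i, dist (A i) (F (O i)) <
          ∑ S : Fin n → Fin 2, M.out n F c A S * ∑ i, dist (A i) (F (S i)) := by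
  set γ : ℝ := 3 - α with hγdef
  have hγ : 0 < γ := by simp [hγdef]; linarith
  set ε : ℝ := min (γ/8) (1/2) with hεdef
  have hε0 : 0 < ε := lt_min (by linarith) (by norm_num)
  have hε2 : ε ≤ 1/2 := min_le_right _ _
  have hε8 : ε ≤ γ/8 := min_le_left _ _
  set n : ℕ := ⌈(4:ℝ)/γ⌉₊ + 1 with hndef
  have hn1 : 1 ≤ n := by omega
  have hnR : (4:ℝ)/γ < n := by
    have h1 : (4:ℝ)/γ ≤ ⌈(4:ℝ)/γ⌉₊ := Nat.le_ceil _
    have h2 : ((⌈(4:ℝ)/γ⌉₊ : ℝ)) < n := by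
      rw [hndef]; push_cast; linarith
    linarith
  have hnpos : (0:ℝ) < n := by
    have : (1:ℝ) ≤ n := by exact_mod_cast hn1
    linarith
  have h2n : 2 / (n:ℝ) < γ/2 := by
    rw [div_lt_div_iff₀ hnpos (by norm_num)]
    have h4 : 4 < (n:ℝ) * γ := by
      rw [div_lt_iff₀ hγ] at hnR; linarith
    nlinarith
  set F : Fin 2 → ℝ := ![0, 2] with hF
  set c : Fin 2 → ℕ := ![1, n - 1] with hc
  have hF0 : F 0 = 0 := rfl
  have hF1 : F 1 = 2 := rfl
  have hc0 : c 0 = 1 := rfl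
  have hc1 : c 1 = n - 1 := rfl
  have hcap : n ≤ c 0 + c 1 := by rw [hc0, hc1]; omega
  set T : Fin n → ℝ := fun _ => 2 with hT
  have hvalid : ∀ (A : Fin n → ℝ) (S : Fin n → Fin 2), M.out n F c A S ≠ 0 →
      ∃ j, ∀ i, S i = 0 ↔ i = j := by
    intro A S hS
    apply exists_unique_zero n hn1 S
    · have := M.supp_valid n F c A S hcap hS 0; rwa [hc0] at this
    · have := M.supp_valid n F c A S hcap hS 1; rwa [hc1] at this
  have hTtot : ∑ S : Fin n → Fin 2, M.out n F c T S = 1 := M.total_one n F c T hcap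
  set pT : Fin n → ℝ :=
    fun k => ∑ S : Fin n → Fin 2, M.out n F c T S * (if S k = 0 then (1:ℝ) else 0) with hpT
  have hsumT : (∑ k : Fin n, pT k) = 1 := by
    have hpt : ∀ S : Fin n → Fin 2,
        M.out n F c T S * (∑ k : Fin n, (if S k = 0 then (1:ℝ) else 0))
          = M.out n F c T S := by
      intro S
      rcases eq_or_ne (M.out n F c T S) 0 with h | h
      · rw [h, zero_mul]
      · obtain ⟨j, hj⟩ := hvalid T S h
        have hχ : (∑ k : Fin n, (if S k = 0 then (1:ℝ) else 0)) = 1 := by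
          rw [Finset.sum_congr rfl (fun i _ => by rw [if_congr (hj i) rfl rfl])]
          rw [Finset.sum_ite_eq' Finset.univ j]
          simp
        rw [hχ, mul_one]
    calc (∑ k : Fin n, pT k)
        = ∑ S : Fin n → Fin 2, M.out n F c T S * (∑ k : Fin n, (if S k = 0 then (1:ℝ) else 0)) := by
          rw [hpT, Finset.sum_comm]
          exact Finset.sum_congr rfl fun S _ => (Finset.mul_sum _ _ _).symm
      _ = ∑ S : Fin n → Fin 2, M.out n F c T S := Finset.sum_congr rfl fun S _ => hpt S
      _ = 1 := hTtot
  obtain ⟨k, hk⟩ : ∃ k : Fin n, pT k ≤ 1 / n := by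
    by_contra hcon
    push_neg at hcon
    have hne : (Finset.univ : Finset (Fin n)).Nonempty := by
      refine ⟨⟨0, ?_⟩, Finset.mem_univ _⟩; omega
    have hlt : ∑ _k : Fin n, (1 / (n:ℝ)) < ∑ k : Fin n, pT k :=
      Finset.sum_lt_sum_of_nonempty hne (fun k _ => hcon k)
    rw [Finset.sum_const, Finset.card_univ, Fintype.card_fin, nsmul_eq_mul,
      mul_one_div, div_self (ne_of_gt hnpos)] at hlt
    linarith [hsumT]
  set A : Fin n → ℝ := fun i => if i = k then 1 + ε else 2 with hA
  have hAk : A k = 1 + ε := by simp [hA]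
  have hAo : ∀ i, i ≠ k → A i = 2 := by intro i h; simp [hA, h]
  have hupd : Function.update A k 2 = T := by
    funext i
    rw [Function.update_apply]
    by_cases h : i = k <;> simp [hA, hT, h]
  have hAtot : ∑ S : Fin n → Fin 2, M.out n F c A S = 1 := M.total_one n F c A hcap
  set pB : ℝ :=
    ∑ S : Fin n → Fin 2, M.out n F c A S * (if S k = 0 then (1:ℝ) else 0) with hpB
  have hpB0 : 0 ≤ pB := by
    rw [hpB]
    apply Finset.sum_nonneg
    intro S _
    apply mul_nonneg (M.nonneg n F c A S)
    split <;> norm_num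
  -- truthfulness gives pB ≤ pT k
  have hdistform : ∀ S : Fin n → Fin 2,
      dist (A k) (F (S k)) = (1 - ε) + (2 * ε) * (if S k = 0 then (1:ℝ) else 0) := by
    intro S
    rw [hAk]
    rcases (by omega : S k = 0 ∨ S k = 1) with h | h <;> rw [h]
    · rw [hF0, if_pos rfl, Real.dist_eq, abs_of_nonneg (by linarith)]; ring
    · rw [hF1, if_neg (by omega : ¬ ((1 : Fin 2) = 0)), Real.dist_eq,
        abs_of_nonpos (by linarith)]; ring
  have hLHS : ∑ S : Fin n → Fin 2, M.out n F c A S * dist (A k) (F (S k))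
      = (1 - ε) + (2 * ε) * pB := by
    rw [Finset.sum_congr rfl (fun S _ => by rw [hdistform S]),
      expand_sum, hAtot, mul_one, hpB]
  have hRHS : ∑ S : Fin n → Fin 2, M.out n F c T S * dist (A k) (F (S k))
      = (1 - ε) + (2 * ε) * pT k := by
    rw [Finset.sum_congr rfl (fun S _ => by rw [hdistform S]),
      expand_sum, hTtot, mul_one, hpT]
  have hpBT : pB ≤ pT k := by
    have htr := M.truthful n F c hcap A k 2
    rw [hupd, hLHS, hRHS] at htr
    have h2 : (2 * ε) * pB ≤ (2 * ε) * pT k := by linarith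
    exact (mul_le_mul_iff_right₀ (by linarith : (0:ℝ) < 2 * ε)).mp h2
  -- expected cost of the mechanism on A
  have hcost : ∀ S : Fin n → Fin 2,
      M.out n F c A S * (∑ i, dist (A i) (F (S i)))
        = M.out n F c A S * ((3 - ε) + (-(2 - 2 * ε)) * (if S k = 0 then (1:ℝ) else 0)) := by
    intro S
    rcases eq_or_ne (M.out n F c A S) 0 with h | h
    · rw [h, zero_mul, zero_mul]
    · obtain ⟨j, hj⟩ := hvalid A S h
      rw [cost_eval n k j ε (le_of_lt hε0) (by linarith) A hAk hAo F hF0 hF1 S hj]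
      by_cases hjk : j = k
      · have hSk : S k = 0 := (hj k).mpr hjk.symm
        rw [if_pos hjk, if_pos hSk]; ring
      · have hSk : S k ≠ 0 := fun h0 => hjk ((hj k).mp h0).symm
        rw [if_neg hjk, if_neg hSk]; ring
  have hE : ∑ S : Fin n → Fin 2, M.out n F c A S * (∑ i, dist (A i) (F (S i)))
      = (3 - ε) + (-(2 - 2 * ε)) * pB := by
    rw [Finset.sum_congr rfl (fun S _ => hcost S), expand_sum, hAtot, mul_one, hpB]
  -- the optimal assignment
  set O : Fin n → Fin 2 := fun i => if i = k then 0 else 1 with hOdef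
  have hO : ∀ i, O i = 0 ↔ i = k := by
    intro i
    by_cases h : i = k <;> simp [hOdef, h]
  have hoptcost : ∑ i, dist (A i) (F (O i)) = 1 + ε := by
    rw [cost_eval n k k ε (le_of_lt hε0) (by linarith) A hAk hAo F hF0 hF1 O hO,
      if_pos rfl]
  have hOfilter0 : (Finset.univ.filter (fun i => O i = 0)).card = 1 := by
    have : Finset.univ.filter (fun i => O i = 0) = {k} := by
      ext i; simp [hO i]
    rw [this, Finset.card_singleton]
  have hOcaps : ∀ j : Fin 2, (Finset.univ.filter (fun i => O i = j)).card ≤ c j := by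
    intro j
    have hpart := filter_zero_one_card n O
    rcases (by omega : j = 0 ∨ j = 1) with h | h <;> subst h
    · rw [hc0, hOfilter0]
    · rw [hc1]; omega
  clear_value pB pT O A T c F n ε γ
  refine ⟨n, F, c, A, hcap, O, hOcaps, ?_, ?_⟩
  · intro O' hv
    obtain ⟨j, hj⟩ := exists_unique_zero n hn1 O'
      (by have h := hv 0; omega) (by have h := hv 1; omega)
    rw [hoptcost, cost_eval n k j ε (le_of_lt hε0) (by linarith) A hAk hAo F hF0 hF1 O' hj]
    by_cases h : j = k
    · rw [if_pos h]
    · rw [if_neg h]; linarith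
  · rw [hoptcost, hE]
    have hpBn : pB ≤ 1 / n := le_trans hpBT hk
    have h1 : (2 - 2 * ε) * pB ≤ 2 * (1 / (n:ℝ)) := by
      have ha : (2:ℝ) * pB ≤ 2 * (1 / (n:ℝ)) := by linarith
      have hb : (0:ℝ) ≤ ε * pB := mul_nonneg (le_of_lt hε0) hpB0
      nlinarith [ha, hb]
    have hεα : ε + ε * α ≤ γ / 2 := by
      rcases le_or_gt (1 + α) 0 with h | h
      · have h5 : ε * (1 + α) ≤ 0 := mul_nonpos_of_nonneg_of_nonpos (le_of_lt hε0) h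
        have h6 : ε * (1 + α) = ε + ε * α := by ring
        linarith
      · have h4 : (1 + α) < 4 := by linarith
        have h5 : ε * (1 + α) ≤ (γ/8) * (1 + α) := mul_le_mul_of_nonneg_right hε8 (le_of_lt h)
        have h6 : (γ/8) * (1 + α) ≤ (γ/8) * 4 := mul_le_mul_of_nonneg_left (le_of_lt h4) (by linarith)
        have h7 : ε * (1 + α) = ε + ε * α := by ring
        linarith
    have hγa : γ = 3 - α := hγdef
    have h2n' : 2 * (1 / (n:ℝ)) = 2 / n := by ring
    have h8 : α * (1 + ε) = α + α * ε := by ring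
    have h9 : (3:ℝ) - ε + -(2 - 2 * ε) * pB = 3 - ε - (2 - 2*ε) * pB := by ring
    linarith [h1, h2n, hεα, hγdef]
end
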